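/- Let α ∈ (1,3/2) be a strong random matching parameter for the random symmetric doubling map and p ∈ (0,1). If μ_p is the stationary probability measure with density bounded above by 1/α − (1−p)c₁/2 on (α−1,1] and by 1/α − p·c₂/2 on [−1,1−α), where c₁ = γ₁+1/α > 0, c₂ = 1/α+γ₃ > 0, and density equal to 1/α on [1−α,α−1], then π_0(α,p) = (α−1)/α + (α−1)/(2α) + p·μ_p([α−1,1/2]) + (1−p)·μ_p([−1/2,1−α]) ≤ 1/2 − ((3−2α)/2)·(p(1−p)/2)·min{c₁,c₂} < 1/2. -/

import Mathlib

open MeasureTheory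

/-- The symmetric doubling map `S_α`. -/
noncomputable def symDoubling (α : ℝ) (x : ℝ) : ℝ :=
  if x < -(1/2) then 2*x + α else if x ≤ 1/2 then 2*x else 2*x - α

/-- The condition `1/2 < S_α^n(1) < α - 1/2`; its satisfiability is matching for `S_α`,
equivalent to strong random matching for the random symmetric doubling map `R_α`. -/
noncomputable def matchCond (α : ℝ) (n : ℕ) : Prop :=
  1/2 < (symDoubling α)^[n] 1 ∧ (symDoubling α)^[n] 1 < α - 1/2

/-- Let `α ∈ (1,3/2)` be a strong random matching parameter and `p ∈ (0,1)`.  Suppose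
`μ_p` is the stationary probability measure, supported on `[-1,1]`, with (nonnegative)
density `f` satisfying `f ≤ 1/α - (1-p)c₁/2` on `(α-1,1]`, `f ≤ 1/α - p·c₂/2` on
`[-1,1-α)` and `f = 1/α` on `[1-α,α-1]`, where `c₁ = γ₁ + 1/α > 0` and
`c₂ = 1/α + γ₃ > 0`.  Then
`π₀(α,p) = (α-1)/α + (α-1)/(2α) + p·μ_p([α-1,1/2]) + (1-p)·μ_p([-1/2,1-α])
  ≤ 1/2 - ((3-2α)/2)·(p(1-p)/2)·min{c₁,c₂} < 1/2`. -/
theorem stmt19 (α p γ₁ γ₃ : ℝ)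
    (hα : α ∈ Set.Ioo (1:ℝ) (3/2)) (hp : p ∈ Set.Ioo (0:ℝ) 1)
    (m : ℕ) (hm : matchCond α m)
    (hc₁ : 0 < γ₁ + 1/α) (hc₂ : 0 < 1/α + γ₃)
    (μ : Measure ℝ) (hprob : IsProbabilityMeasure μ)
    (f : ℝ → ℝ) (hfnn : ∀ x, 0 ≤ f x)
    (hdens : ∀ B : Set ℝ, MeasurableSet B → μ B = ENNReal.ofReal (∫ x in B, f x))
    (hsupp : μ (Set.Icc (-1:ℝ) 1)ᶜ = 0)
    (hub1 : ∀ x ∈ Set.Ioc (α-1) (1:ℝ), f x ≤ 1/α - (1-p) * (γ₁ + 1/α) / 2)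
    (hub2 : ∀ x ∈ Set.Ico (-1:ℝ) (1-α), f x ≤ 1/α - p * (1/α + γ₃) / 2)
    (hmid : ∀ x ∈ Set.Icc (1-α) (α-1), f x = 1/α) :
    (α-1)/α + (α-1)/(2*α)
        + p * (μ (Set.Icc (α-1) (1/2:ℝ))).toReal
        + (1-p) * (μ (Set.Icc (-(1/2):ℝ) (1-α))).toReal
      ≤ 1/2 - ((3-2*α)/2) * (p*(1-p)/2) * min (γ₁ + 1/α) (1/α + γ₃) ∧
    (α-1)/α + (α-1)/(2*α)
        + p * (μ (Set.Icc (α-1) (1/2:ℝ))).toReal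
        + (1-p) * (μ (Set.Icc (-(1/2):ℝ) (1-α))).toReal
      < 1/2 := by
  obtain ⟨hα1, hα2⟩ := hα
  obtain ⟨hp0, hp1⟩ := hp
  have hα0 : (0:ℝ) < α := by linarith
  -- f is integrable
  have huniv : μ Set.univ = 1 := measure_univ
  have hI : Integrable f := by
    by_contra h
    rw [hdens Set.univ MeasurableSet.univ, Measure.restrict_univ,
      integral_undef h] at huniv
    simp at huniv
  set b₁ : ℝ := 1/α - (1-p) * (γ₁ + 1/α) / 2 with hb₁
  set b₂ : ℝ := 1/α - p * (1/α + γ₃) / 2 with hb₂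
  have key1 : (μ (Set.Icc (α-1) (1/2:ℝ))).toReal ≤ ((3-2*α)/2) * b₁ := by
    rw [hdens _ measurableSet_Icc,
      ENNReal.toReal_ofReal (setIntegral_nonneg measurableSet_Icc fun x _ => hfnn x),
      integral_Icc_eq_integral_Ioc]
    calc ∫ x in Set.Ioc (α-1) (1/2:ℝ), f x
        ≤ ∫ _x in Set.Ioc (α-1) (1/2:ℝ), b₁ := by
          refine setIntegral_mono_on hI.integrableOn (integrableOn_const ?_)
            measurableSet_Ioc fun x hx =>
            hub1 x (Set.Ioc_subset_Ioc_right (by linarith) hx)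
          exact measure_Ioc_lt_top.ne
      _ = ((3-2*α)/2) * b₁ := by
          rw [setIntegral_const, measureReal_def, Real.volume_Ioc, smul_eq_mul,
            ENNReal.toReal_ofReal (by linarith)]
          ring_nf
  have key2 : (μ (Set.Icc (-(1/2):ℝ) (1-α))).toReal ≤ ((3-2*α)/2) * b₂ := by
    rw [hdens _ measurableSet_Icc,
      ENNReal.toReal_ofReal (setIntegral_nonneg measurableSet_Icc fun x _ => hfnn x),
      integral_Icc_eq_integral_Ico]
    calc ∫ x in Set.Ico (-(1/2):ℝ) (1-α), f x
        ≤ ∫ _x in Set.Ico (-(1/2):ℝ) (1-α), b₂ := by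
          refine setIntegral_mono_on hI.integrableOn (integrableOn_const ?_)
            measurableSet_Ico fun x hx =>
            hub2 x (Set.Ico_subset_Ico_left (by linarith) hx)
          exact measure_Ico_lt_top.ne
      _ = ((3-2*α)/2) * b₂ := by
          rw [setIntegral_const, measureReal_def, Real.volume_Ico, smul_eq_mul,
            ENNReal.toReal_ofReal (by linarith)]
          ring_nf
  set t₁ := (μ (Set.Icc (α-1) (1/2:ℝ))).toReal with ht₁
  set t₂ := (μ (Set.Icc (-(1/2):ℝ) (1-α))).toReal with ht₂
  have ht₁0 : 0 ≤ t₁ := ENNReal.toReal_nonneg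
  have ht₂0 : 0 ≤ t₂ := ENNReal.toReal_nonneg
  set M := min (γ₁ + 1/α) (1/α + γ₃) with hM
  have hM1 : M ≤ γ₁ + 1/α := min_le_left _ _
  have hM2 : M ≤ 1/α + γ₃ := min_le_right _ _
  have hM0 : 0 < M := lt_min hc₁ hc₂
  have hL : (0:ℝ) < (3-2*α)/2 := by linarith
  have hsum : p * t₁ + (1-p) * t₂ ≤ ((3-2*α)/2) * (1/α - p*(1-p)*M) := by
    have h1 : p * t₁ ≤ p * (((3-2*α)/2) * b₁) :=
      mul_le_mul_of_nonneg_left key1 hp0.le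
    have h2 : (1-p) * t₂ ≤ (1-p) * (((3-2*α)/2) * b₂) :=
      mul_le_mul_of_nonneg_left key2 (by linarith)
    have h3 : p * (((3-2*α)/2) * b₁) + (1-p) * (((3-2*α)/2) * b₂)
        = ((3-2*α)/2) * (1/α - p*(1-p)*((γ₁+1/α)+(1/α+γ₃))/2) := by
      rw [hb₁, hb₂]; ring
    have h4 : ((3-2*α)/2) * (1/α - p*(1-p)*((γ₁+1/α)+(1/α+γ₃))/2)
        ≤ ((3-2*α)/2) * (1/α - p*(1-p)*M) := by
      apply mul_le_mul_of_nonneg_left _ hL.le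
      have hpp : 0 < p*(1-p) := mul_pos hp0 (by linarith)
      nlinarith
    linarith
  have e1 : (α-1)/α + (α-1)/(2*α) + ((3-2*α)/2) * (1/α) = 1/2 := by
    field_simp; ring
  have hpp : 0 < p*(1-p) := mul_pos hp0 (by linarith)
  have hpos : 0 < ((3-2*α)/2) * (p*(1-p)) * M := mul_pos (mul_pos hL hpp) hM0
  have e2 : ((3-2*α)/2) * (1/α - p*(1-p)*M)
      = ((3-2*α)/2) * (1/α) - ((3-2*α)/2) * (p*(1-p)) * M := by ring
  have e3 : ((3-2*α)/2) * (p*(1-p)/2) * M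
      = (((3-2*α)/2) * (p*(1-p)) * M) / 2 := by ring
  have hfin : (α-1)/α + (α-1)/(2*α) + p * t₁ + (1-p) * t₂
      ≤ 1/2 - ((3-2*α)/2) * (p*(1-p)/2) * M := by linarith
  exact ⟨hfin, lt_of_le_of_lt hfin (by linarith)⟩
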